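/- Fix real numbers ū^L ≥ 0 and H_L, H_R (anti-diffusive flux differences). The set S = {(θ_L, θ_R) ∈ [0,1]² : ū^L + θ_L H_L + θ_R H_R ≥ 0} is convex, contains (0,0), and contains the box [0, Λ_L] × [0, Λ_R], where Λ_I = min{1, ū^L / (ε - Σ_{J : H_J < 0} H_J)} if H_I < 0 and Λ_I = 1 otherwise, for any ε > 0 (indices I, J ∈ {L, R}). -/
import Mathlib


theorem stmt_14 (ubarL HL HR ε : ℝ) (hubar : 0 ≤ ubarL) (hε : 0 < ε)
    (ΛL ΛR : ℝ)
    (hΛL : ΛL = if HL < 0 then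
        min 1 (ubarL / (ε - ((if HL < 0 then HL else 0) + (if HR < 0 then HR else 0))))
      else 1)
    (hΛR : ΛR = if HR < 0 then
        min 1 (ubarL / (ε - ((if HL < 0 then HL else 0) + (if HR < 0 then HR else 0))))
      else 1)
    (S : Set (ℝ × ℝ))
    (hS : S = {p : ℝ × ℝ | p.1 ∈ Set.Icc (0:ℝ) 1 ∧ p.2 ∈ Set.Icc (0:ℝ) 1 ∧
        0 ≤ ubarL + p.1 * HL + p.2 * HR}) :
    Convex ℝ S ∧ (0, 0) ∈ S ∧ Set.Icc (0:ℝ) ΛL ×ˢ Set.Icc (0:ℝ) ΛR ⊆ S := by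
  subst hS
  set D : ℝ := ε - ((if HL < 0 then HL else 0) + (if HR < 0 then HR else 0)) with hD
  have h1 : (if HL < 0 then HL else 0) ≤ 0 := by split <;> linarith
  have h2 : (if HR < 0 then HR else 0) ≤ 0 := by split <;> linarith
  have hDpos : 0 < D := by simp only [hD]; linarith
  have hu : 0 ≤ ubarL / D := div_nonneg hubar hDpos.le
  have huD : (ubarL / D) * D = ubarL := div_mul_cancel₀ _ hDpos.ne'
  refine ⟨?_, ?_, ?_⟩
  · intro p hp q hq a b ha hb hab
    obtain ⟨⟨hp1, hp2⟩, ⟨hp3, hp4⟩, hp5⟩ := hp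
    obtain ⟨⟨hq1, hq2⟩, ⟨hq3, hq4⟩, hq5⟩ := hq
    simp only [Set.mem_setOf_eq, Prod.smul_fst, Prod.smul_snd, Prod.fst_add, Prod.snd_add,
      smul_eq_mul, Set.mem_Icc]
    refine ⟨⟨by nlinarith, by nlinarith⟩, ⟨by nlinarith, by nlinarith⟩, by nlinarith⟩
  · simp only [Set.mem_setOf_eq, Set.mem_Icc]
    norm_num
    linarith
  · rintro ⟨x, y⟩ ⟨hx, hy⟩
    simp only [Set.mem_Icc] at hx hy
    obtain ⟨hx0, hx1⟩ := hx
    obtain ⟨hy0, hy1⟩ := hy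
    have hΛL1 : ΛL ≤ 1 := by
      rw [hΛL]; split
      · exact min_le_left _ _
      · exact le_refl 1
    have hΛR1 : ΛR ≤ 1 := by
      rw [hΛR]; split
      · exact min_le_left _ _
      · exact le_refl 1
    have hxHL : (ubarL / D) * (if HL < 0 then HL else 0) ≤ x * HL := by
      by_cases h : HL < 0
      · have hxu : x ≤ ubarL / D := le_trans hx1 (by rw [hΛL, if_pos h]; exact min_le_right _ _)
        simp only [if_pos h]
        nlinarith
      · simp only [if_neg h, mul_zero]
        exact mul_nonneg hx0 (not_lt.mp h)
    have hyHR : (ubarL / D) * (if HR < 0 then HR else 0) ≤ y * HR := by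
      by_cases h : HR < 0
      · have hyu : y ≤ ubarL / D := le_trans hy1 (by rw [hΛR, if_pos h]; exact min_le_right _ _)
        simp only [if_pos h]
        nlinarith
      · simp only [if_neg h, mul_zero]
        exact mul_nonneg hy0 (not_lt.mp h)
    refine ⟨⟨hx0, le_trans hx1 hΛL1⟩, ⟨hy0, le_trans hy1 hΛR1⟩, ?_⟩
    have hεu : 0 ≤ (ubarL / D) * ε := mul_nonneg hu hε.le
    simp only [hD] at huD
    nlinarith [hxHL, hyHR]
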